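/- Let φ : W → V be a linear map between vector spaces. Define GL(φ)₁ = {A ∈ Hom(V,W) : (I + Aφ, I + φA) ∈ GL(W) × GL(V)} with operation A₁ ⊙ A₂ := A₁ + A₂ + A₁ ∘ φ ∘ A₂. Then (GL(φ)₁, ⊙) is a group with identity the zero map, and the inverse of A is −A ∘ (I + φ ∘ A)⁻¹ = −(I + A ∘ φ)⁻¹ ∘ A. -/

import Mathlib

open LinearMap

variable {K W V : Type} [Field K] [AddCommGroup W] [AddCommGroup V]
  [Module K W] [Module K V]

/-- Membership in the Whitehead group `GL(φ)₁`. -/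
def glOne1Mem (φ : W →ₗ[K] V) (A : V →ₗ[K] W) : Prop :=
  IsUnit ((1 : Module.End K W) + A ∘ₗ φ) ∧ IsUnit ((1 : Module.End K V) + φ ∘ₗ A)

/-- The group operation `A₁ ⊙ A₂ = A₁ + A₂ + A₁ ∘ φ ∘ A₂`. -/
def glMul (φ : W →ₗ[K] V) (A₁ A₂ : V →ₗ[K] W) : V →ₗ[K] W :=
  A₁ + A₂ + A₁ ∘ₗ φ ∘ₗ A₂

/-- The candidate inverse `-A ∘ (I + φ∘A)⁻¹`. -/
noncomputable def glInv (φ : W →ₗ[K] V) (A : V →ₗ[K] W) : V →ₗ[K] W :=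
  -(A ∘ₗ Ring.inverse ((1 : Module.End K V) + φ ∘ₗ A))

lemma glKeyW (φ : W →ₗ[K] V) (A B : V →ₗ[K] W) :
    (1 : Module.End K W) + glMul φ A B ∘ₗ φ
      = ((1 : Module.End K W) + A ∘ₗ φ) * (1 + B ∘ₗ φ) := by
  simp only [glMul, Module.End.mul_eq_comp, comp_add, add_comp, comp_assoc, Module.End.one_eq_id,
    id_comp, comp_id]
  abel

lemma glKeyV (φ : W →ₗ[K] V) (A B : V →ₗ[K] W) :
    (1 : Module.End K V) + φ ∘ₗ glMul φ A B
      = ((1 : Module.End K V) + φ ∘ₗ A) * (1 + φ ∘ₗ B) := by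
  simp only [glMul, Module.End.mul_eq_comp, comp_add, add_comp, comp_assoc, Module.End.one_eq_id,
    id_comp, comp_id]
  abel

lemma glSwapInv (φ : W →ₗ[K] V) (A : V →ₗ[K] W) (h : glOne1Mem φ A) :
    A ∘ₗ Ring.inverse ((1 : Module.End K V) + φ ∘ₗ A)
      = Ring.inverse ((1 : Module.End K W) + A ∘ₗ φ) ∘ₗ A := by
  obtain ⟨hv, hu⟩ := h
  set u : Module.End K V := 1 + φ ∘ₗ A with hu'
  set v : Module.End K W := 1 + A ∘ₗ φ with hv'
  have hcomm : v ∘ₗ A = A ∘ₗ u := by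
    rw [hu', hv']
    simp only [add_comp, comp_add, Module.End.one_eq_id, id_comp, comp_id, comp_assoc]
  calc A ∘ₗ Ring.inverse u
      = (Ring.inverse v * v) ∘ₗ (A ∘ₗ Ring.inverse u) := by
        rw [Ring.inverse_mul_cancel _ hv, Module.End.one_eq_id, id_comp]
    _ = Ring.inverse v ∘ₗ ((v ∘ₗ A) ∘ₗ Ring.inverse u) := by
        rw [Module.End.mul_eq_comp, comp_assoc, comp_assoc]
    _ = Ring.inverse v ∘ₗ (A ∘ₗ (u ∘ₗ Ring.inverse u)) := by rw [hcomm, comp_assoc]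
    _ = Ring.inverse v ∘ₗ A := by
        rw [← Module.End.mul_eq_comp u, Ring.mul_inverse_cancel _ hu, Module.End.one_eq_id, comp_id]

lemma glMulInvRight (φ : W →ₗ[K] V) (A : V →ₗ[K] W) (h : glOne1Mem φ A) :
    glMul φ A (glInv φ A) = 0 := by
  obtain ⟨hv, hu⟩ := h
  rw [glMul, glInv]
  set u : Module.End K V := 1 + φ ∘ₗ A with hu'
  have key : A ∘ₗ (u ∘ₗ Ring.inverse u) = A := by
    rw [← Module.End.mul_eq_comp, Ring.mul_inverse_cancel _ hu, Module.End.one_eq_id, comp_id]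
  have expand : A ∘ₗ (u ∘ₗ Ring.inverse u)
      = A ∘ₗ Ring.inverse u + A ∘ₗ φ ∘ₗ A ∘ₗ Ring.inverse u := by
    rw [hu']
    simp only [add_comp, comp_add, Module.End.one_eq_id, id_comp, comp_assoc]
  rw [expand] at key
  have goal_eq : A + -(A ∘ₗ Ring.inverse u) + A ∘ₗ φ ∘ₗ (-(A ∘ₗ Ring.inverse u))
      = A - (A ∘ₗ Ring.inverse u + A ∘ₗ φ ∘ₗ A ∘ₗ Ring.inverse u) := by
    simp only [comp_neg]; abel
  rw [goal_eq, key, sub_self]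

lemma glMulInvLeft (φ : W →ₗ[K] V) (A : V →ₗ[K] W) (h : glOne1Mem φ A) :
    glMul φ (glInv φ A) A = 0 := by
  obtain ⟨hv, hu⟩ := h
  rw [glMul, glInv]
  set u : Module.End K V := 1 + φ ∘ₗ A with hu'
  have key : A ∘ₗ (Ring.inverse u ∘ₗ u) = A := by
    rw [← Module.End.mul_eq_comp, Ring.inverse_mul_cancel _ hu, Module.End.one_eq_id, comp_id]
  have expand : A ∘ₗ (Ring.inverse u ∘ₗ u)
      = A ∘ₗ Ring.inverse u + (A ∘ₗ Ring.inverse u) ∘ₗ φ ∘ₗ A := by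
    rw [hu']
    simp only [add_comp, comp_add, Module.End.one_eq_id, id_comp, comp_id, comp_assoc]
  rw [expand] at key
  have goal_eq : -(A ∘ₗ Ring.inverse u) + A + (-(A ∘ₗ Ring.inverse u)) ∘ₗ φ ∘ₗ A
      = A - (A ∘ₗ Ring.inverse u + (A ∘ₗ Ring.inverse u) ∘ₗ φ ∘ₗ A) := by
    simp only [neg_comp]; abel
  rw [goal_eq, key, sub_self]

/-- `(GL(φ)₁, ⊙)` is a group with identity `0`, and the inverse of `A` is
`−A∘(I+φ∘A)⁻¹ = −(I+A∘φ)⁻¹∘A`. -/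
theorem gl_phi_one_group (φ : W →ₗ[K] V) :
    glOne1Mem φ (0 : V →ₗ[K] W) ∧
    (∀ A B : V →ₗ[K] W, glOne1Mem φ A → glOne1Mem φ B → glOne1Mem φ (glMul φ A B)) ∧
    (∀ A B C : V →ₗ[K] W, glMul φ (glMul φ A B) C = glMul φ A (glMul φ B C)) ∧
    (∀ A : V →ₗ[K] W, glMul φ A 0 = A ∧ glMul φ 0 A = A) ∧
    (∀ A : V →ₗ[K] W, glOne1Mem φ A →
      glOne1Mem φ (glInv φ A) ∧
      glMul φ A (glInv φ A) = 0 ∧ glMul φ (glInv φ A) A = 0 ∧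
      glInv φ A = -((Ring.inverse ((1 : Module.End K W) + A ∘ₗ φ)) ∘ₗ A)) := by
  refine ⟨⟨by simp [glOne1Mem], by simp [glOne1Mem]⟩, ?_, ?_, ?_, ?_⟩
  · intro A B hA hB
    exact ⟨glKeyW φ A B ▸ hA.1.mul hB.1, glKeyV φ A B ▸ hA.2.mul hB.2⟩
  · intro A B C
    simp only [glMul, comp_add, add_comp, comp_assoc]
    abel
  · intro A
    constructor <;> simp [glMul]
  · intro A hA
    have hr := glMulInvRight φ A hA
    have hl := glMulInvLeft φ A hA
    refine ⟨⟨?_, ?_⟩, hr, hl, by rw [glInv, glSwapInv φ A hA]⟩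
    · have h1 : ((1 : Module.End K W) + A ∘ₗ φ) * (1 + glInv φ A ∘ₗ φ) = 1 := by
        rw [← glKeyW, hr]; simp
      have h2 : ((1 : Module.End K W) + glInv φ A ∘ₗ φ) * (1 + A ∘ₗ φ) = 1 := by
        rw [← glKeyW, hl]; simp
      exact ⟨⟨_, _, h2, h1⟩, rfl⟩
    · have h1 : ((1 : Module.End K V) + φ ∘ₗ A) * (1 + φ ∘ₗ glInv φ A) = 1 := by
        rw [← glKeyV, hr]; simp
      have h2 : ((1 : Module.End K V) + φ ∘ₗ glInv φ A) * (1 + φ ∘ₗ A) = 1 := by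
        rw [← glKeyV, hl]; simp
      exact ⟨⟨_, _, h2, h1⟩, rfl⟩
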